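/- Let 𝒜 and ℬ be uniform algebras and T : 𝒜⁻¹ → ℬ⁻¹ a surjective map satisfying ‖TfTg − 1‖∞ = ‖fg − 1‖∞ for all f, g ∈ 𝒜⁻¹ with T1 = 1. Then T(−1) = −1 and T(−i) = −T(i), and (Ti)² = −1. -/

import Mathlib

set_option maxHeartbeats 1000000
set_option synthInstance.maxHeartbeats 400000

set_option maxHeartbeats 1000000 in
lemma auxC (z z' : ℂ) (hzz' : z * z' = 1)
    (h1 : Complex.normSq (z - 1) ≤ 2) (h2 : Complex.normSq (z + 1) ≤ 2)
    (h3 : Complex.normSq (z' - 1) ≤ 2) (h4 : Complex.normSq (z' + 1) ≤ 2) :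
    z * z = -1 ∧ z' = -z := by
  simp only [Complex.ext_iff, Complex.mul_re, Complex.mul_im, Complex.normSq_apply,
    Complex.sub_re, Complex.sub_im, Complex.add_re, Complex.add_im, Complex.one_re,
    Complex.one_im, Complex.neg_re, Complex.neg_im] at *
  obtain ⟨e1, e2⟩ := hzz'
  set a := z.re; set b := z.im; set c := z'.re; set d := z'.im
  ring_nf at h1 h2 h3 h4 e1 e2 ⊢
  have s1 : a^2 + b^2 ≤ 1 := by linarith
  have s2 : c^2 + d^2 ≤ 1 := by linarith
  have key : (a^2 + b^2) * (c^2 + d^2) = 1 := by nlinarith [e1, e2]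
  have p1 : (0:ℝ) ≤ a^2 + b^2 := by positivity
  have p2 : (0:ℝ) ≤ c^2 + d^2 := by positivity
  have n1 : a^2 + b^2 = 1 := by nlinarith [mul_nonneg (sub_nonneg.2 s2) p1]
  have n2 : c^2 + d^2 = 1 := by nlinarith [mul_nonneg (sub_nonneg.2 s1) p2]
  have a0 : a = 0 := by linarith
  have c0 : c = 0 := by linarith
  have asq : a^2 = 0 := by rw [a0]; ring
  have csq : c^2 = 0 := by rw [c0]; ring
  have b2 : b^2 = 1 := by linarith
  have bd : b * d = -1 := by rw [a0, c0] at e1; linarith [e1]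
  have hb : b ≠ 0 := by intro hb0; rw [hb0] at b2; norm_num at b2
  have bb : b * b = 1 := by rw [← pow_two]; exact b2
  have hbsum : b * (d + b) = 0 := by rw [mul_add, bd, bb]; ring
  have d0 : d = -b := by
    rcases mul_eq_zero.1 hbsum with h' | h'
    · exact absurd h' hb
    · linarith
  refine ⟨⟨?_, ?_⟩, ?_, ?_⟩
  · nlinarith [a0, b2]
  · rw [a0]; ring
  · rw [c0, a0]; ring
  · rw [d0]



/-- The peripheral spectrum of a continuous function on a compact space. -/
noncomputable def perSpec {X : Type*} [TopologicalSpace X] [CompactSpace X]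
    (f : C(X, ℂ)) : Set ℂ :=
  {z | z ∈ Set.range f ∧ ‖z‖ = ‖f‖}

/-- A peak set for a subalgebra of C(X, ℂ). -/
def IsPeakSet {X : Type*} [TopologicalSpace X] [CompactSpace X]
    (A : Subalgebra ℂ C(X, ℂ)) (E : Set X) : Prop :=
  ∃ f ∈ A, perSpec f = {1} ∧ E = f ⁻¹' {1}

/-- The Choquet boundary (set of p-points): points x such that {x} is an
intersection of peak sets. -/
def ChoquetBdry {X : Type*} [TopologicalSpace X] [CompactSpace X]
    (A : Subalgebra ℂ C(X, ℂ)) : Set X :=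
  {x | ∃ P : Set (Set X), (∀ E ∈ P, IsPeakSet A E) ∧ ⋂₀ P = {x}}


/-- The constant `i` as a unit of a subalgebra of `C(X, ℂ)`. -/
noncomputable def iUnit {X : Type*} [TopologicalSpace X] [CompactSpace X]
    (A : Subalgebra ℂ C(X, ℂ)) : (↥A)ˣ :=
  Units.map (algebraMap ℂ ↥A).toMonoidHom (Units.mk0 Complex.I Complex.I_ne_zero)

theorem stmt15 {X Y : Type*} [TopologicalSpace X] [CompactSpace X]
    [TopologicalSpace Y] [CompactSpace Y]
    (A : Subalgebra ℂ C(X, ℂ)) (B : Subalgebra ℂ C(Y, ℂ))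
    (hA : IsClosed (A : Set C(X, ℂ))) (hB : IsClosed (B : Set C(Y, ℂ)))
    (hAsep : ∀ x x' : X, x ≠ x' → ∃ f ∈ A, f x ≠ f x')
    (hBsep : ∀ y y' : Y, y ≠ y' → ∃ g ∈ B, g y ≠ g y')
    (T : (↥A)ˣ → (↥B)ˣ) (hsurj : Function.Surjective T)
    (h : ∀ f g : (↥A)ˣ, ‖(((T f * T g : (↥B)ˣ) : ↥B) : C(Y, ℂ)) - 1‖
        = ‖(((f * g : (↥A)ˣ) : ↥A) : C(X, ℂ)) - 1‖)
    (hT1 : T 1 = 1) :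
    T (-1) = -1 ∧ T (-(iUnit A)) = -(T (iUnit A)) ∧ (T (iUnit A)) ^ 2 = -1 := by
  have hTneg1 : T (-1) = -1 := by
    have smul2 : ∀ F : C(Y,ℂ), (2:ℂ) • F = 2 * F := fun F => by
      rw [Algebra.smul_def, map_ofNat]
    have smul4 : ∀ F : C(Y,ℂ), (4:ℂ) • F = 4 * F := fun F => by
      rw [Algebra.smul_def, map_ofNat]
    set u₀ : ↥B := ((T (-1) : (↥B)ˣ) : ↥B) with hu
    have hsq : u₀ * u₀ = 1 := by
      have h0 := h (-1) (-1)
      have hm : ((-1 : (↥A)ˣ) * (-1)) = 1 := by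
        apply Units.ext; push_cast; ring
      rw [hm] at h0
      simp only [Units.val_one, OneMemClass.coe_one, sub_self, norm_zero] at h0
      have : (((T (-1) * T (-1) : (↥B)ˣ) : ↥B) : C(Y,ℂ)) = 1 := by
        rwa [norm_sub_eq_zero_iff] at h0
      exact Subtype.ext this
    have hinv : (2 + u₀) * (algebraMap ℂ ↥B 3⁻¹ * (2 - u₀)) = 1 := by
      have c3 : algebraMap ℂ ↥B 3⁻¹ * 3 = 1 := by
        rw [show (3 : ↥B) = algebraMap ℂ ↥B 3 from (map_ofNat _ 3).symm, ← map_mul]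
        norm_num
      calc (2 + u₀) * (algebraMap ℂ ↥B 3⁻¹ * (2 - u₀))
          = algebraMap ℂ ↥B 3⁻¹ * (4 - u₀ * u₀) := by ring
        _ = algebraMap ℂ ↥B 3⁻¹ * 3 := by rw [hsq]; norm_num
        _ = 1 := c3
    set V : (↥B)ˣ := ⟨2 + u₀, algebraMap ℂ ↥B 3⁻¹ * (2 - u₀), hinv, by rw [mul_comm]; exact hinv⟩
      with hV
    obtain ⟨g, hg⟩ := hsurj V
    set U : C(Y,ℂ) := (u₀ : C(Y,ℂ)) with hUdef
    have hUsq : U * U = 1 := congrArg Subtype.val hsq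
    have hUnorm : ‖U‖ ≤ 1 := by
      refine (ContinuousMap.norm_le _ zero_le_one).2 fun y => ?_
      have hy : U y * U y = 1 := by
        have := congrArg (fun f : C(Y,ℂ) => f y) hUsq
        simpa using this
      have : ‖U y‖ * ‖U y‖ = 1 := by rw [← norm_mul, hy, norm_one]
      nlinarith [norm_nonneg (U y)]
    set gC : C(X,ℂ) := ((g : ↥A) : C(X,ℂ)) with hgC
    have e1 : ‖gC - 1‖ = ‖1 + U‖ := by
      have h0 := h g 1
      rw [hT1, hg, mul_one, mul_one] at h0
      rw [hgC, ← h0]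
      congr 1
      show ((2 : C(Y,ℂ)) + U) - 1 = 1 + U
      ring
    have e2 : ‖gC + 1‖ ≤ 2 := by
      have h0 := h g (-1)
      rw [hg] at h0
      have hL : (((V * T (-1) : (↥B)ˣ) : ↥B) : C(Y,ℂ)) - 1 = (2:ℂ) • U := by
        rw [smul2]
        show ((2 : C(Y,ℂ)) + U) * U - 1 = 2 * U
        rw [add_mul, hUsq]; ring
      have hR : (((g * (-1) : (↥A)ˣ) : ↥A) : C(X,ℂ)) - 1 = -(gC + 1) := by
        show ((g : ↥A) : C(X,ℂ)) * (-1) - 1 = -(gC + 1)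
        rw [hgC]; ring
      rw [hL, hR, norm_neg, norm_smul] at h0
      rw [← h0, Complex.norm_ofNat]
      nlinarith [hUnorm]
    have e3 : ‖gC * gC - 1‖ = 4 * ‖1 + U‖ := by
      have h0 := h g g
      rw [hg] at h0
      have hL : (((V * V : (↥B)ˣ) : ↥B) : C(Y,ℂ)) - 1 = (4:ℂ) • (1 + U) := by
        rw [smul4]
        show ((2 : C(Y,ℂ)) + U) * ((2 : C(Y,ℂ)) + U) - 1 = 4 * (1 + U)
        have expand : ((2 : C(Y,ℂ)) + U) * ((2 : C(Y,ℂ)) + U) = 4 * U + U * U + 4 := by ring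
        rw [expand, hUsq]; ring
      have hR : (((g * g : (↥A)ˣ) : ↥A) : C(X,ℂ)) - 1 = gC * gC - 1 := rfl
      rw [hL, hR, norm_smul, Complex.norm_ofNat] at h0
      exact h0.symm
    have hfact : gC * gC - 1 = (gC - 1) * (gC + 1) := by ring
    have hle : 4 * ‖1 + U‖ ≤ ‖1 + U‖ * 2 := by
      rw [← e3, hfact]
      calc ‖(gC - 1) * (gC + 1)‖ ≤ ‖gC - 1‖ * ‖gC + 1‖ := norm_mul_le _ _
        _ ≤ ‖1 + U‖ * 2 := by rw [e1]; exact mul_le_mul_of_nonneg_left e2 (norm_nonneg _)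
    have hzero : ‖1 + U‖ = 0 := by nlinarith [norm_nonneg (1 + U)]
    have hUeq : U = -1 := by
      have h1 : (1 : C(Y,ℂ)) + U = 0 := by rwa [norm_eq_zero] at hzero
      linear_combination h1
    refine Units.ext (Subtype.ext ?_)
    show U = ((-1 : ↥B) : C(Y,ℂ))
    rw [hUeq]; rfl
  have hrest : T (-(iUnit A)) = -(T (iUnit A)) ∧ (T (iUnit A)) ^ 2 = -1 := by
    set J : (↥A)ˣ := iUnit A with hJ
    set iC : C(X,ℂ) := ((J : ↥A) : C(X,ℂ)) with hiC
    have hiCalg : iC = algebraMap ℂ C(X,ℂ) Complex.I := rfl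
    set W : C(Y,ℂ) := ((T J : ↥B) : C(Y,ℂ)) with hW
    set W' : C(Y,ℂ) := ((T (-J) : ↥B) : C(Y,ℂ)) with hW'
    -- norm bound for constants
    have hone : ‖(1 : C(X,ℂ))‖ ≤ 1 :=
      (ContinuousMap.norm_le _ zero_le_one).2 (fun x => by simp)
    have hconst : ∀ c : ℂ, ‖algebraMap ℂ C(X,ℂ) c‖ ≤ ‖c‖ := fun c => by
      rw [Algebra.algebraMap_eq_smul_one, norm_smul]
      exact mul_le_of_le_one_right (norm_nonneg c) hone
    have hsub : iC - 1 = algebraMap ℂ C(X,ℂ) (Complex.I - 1) := by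
      rw [map_sub, map_one, hiCalg]
    have hadd : iC + 1 = algebraMap ℂ C(X,ℂ) (Complex.I + 1) := by
      rw [map_add, map_one, hiCalg]
    -- the four norm facts
    have q1 : ‖W - 1‖ ≤ ‖Complex.I - 1‖ := by
      have h0 := h J 1
      rw [hT1, mul_one, mul_one] at h0
      rw [hW, h0, hsub]
      exact hconst _
    have q2 : ‖W + 1‖ ≤ ‖Complex.I + 1‖ := by
      have h0 := h J (-1)
      rw [hTneg1] at h0
      have hL : (((T J * -1 : (↥B)ˣ) : ↥B) : C(Y,ℂ)) - 1 = -(W + 1) := by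
        show W * (-1) - 1 = -(W + 1); ring
      have hR : (((J * -1 : (↥A)ˣ) : ↥A) : C(X,ℂ)) - 1 = -(iC + 1) := by
        show iC * (-1) - 1 = -(iC + 1); ring
      rw [hL, hR, norm_neg, norm_neg] at h0
      rw [h0, hadd]
      exact hconst _
    have q3 : ‖W' - 1‖ ≤ ‖Complex.I + 1‖ := by
      have h0 := h (-J) 1
      rw [hT1, mul_one, mul_one] at h0
      have hR : (((-J : (↥A)ˣ) : ↥A) : C(X,ℂ)) - 1 = -(iC + 1) := by
        show -iC - 1 = -(iC + 1); ring
      rw [hR, norm_neg] at h0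
      rw [hW', h0, hadd]
      exact hconst _
    have q4 : ‖W' + 1‖ ≤ ‖Complex.I - 1‖ := by
      have h0 := h (-J) (-1)
      rw [hTneg1] at h0
      have hL : (((T (-J) * -1 : (↥B)ˣ) : ↥B) : C(Y,ℂ)) - 1 = -(W' + 1) := by
        show W' * (-1) - 1 = -(W' + 1); ring
      have hR : ((((-J) * -1 : (↥A)ˣ) : ↥A) : C(X,ℂ)) - 1 = iC - 1 := by
        show (-iC) * (-1) - 1 = iC - 1; ring
      rw [hL, hR, norm_neg] at h0
      rw [h0, hsub]
      exact hconst _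
    -- W * W' = 1
    have q5 : W * W' = 1 := by
      have h0 := h J (-J)
      have hiC2 : iC * iC = -1 := by
        rw [hiCalg, ← map_mul, Complex.I_mul_I, map_neg, map_one]
      have hR : (((J * -J : (↥A)ˣ) : ↥A) : C(X,ℂ)) - 1 = 0 := by
        show iC * (-iC) - 1 = 0
        rw [show iC * -iC = -(iC * iC) from by ring, hiC2]; ring
      rw [hR, norm_zero] at h0
      have : (((T J * T (-J) : (↥B)ˣ) : ↥B) : C(Y,ℂ)) = 1 := by
        rwa [norm_sub_eq_zero_iff] at h0
      exact this
    -- pointwise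
    have hn1 : Complex.normSq (Complex.I - 1) = 2 := by
      simp [Complex.normSq_apply]; norm_num
    have hn2 : Complex.normSq (Complex.I + 1) = 2 := by
      simp [Complex.normSq_apply]; norm_num
    have keybound : ∀ (F : C(Y,ℂ)) (c : ℂ) (y : Y), ‖F‖ ≤ ‖c‖ →
        Complex.normSq (F y) ≤ Complex.normSq c := by
      intro F c y hb
      have h1 : ‖F y‖ ≤ ‖c‖ := le_trans (ContinuousMap.norm_coe_le_norm F y) hb
      calc Complex.normSq (F y) = ‖F y‖^2 := by
            rw [← Complex.sq_norm]
        _ ≤ ‖c‖^2 := pow_le_pow_left₀ (norm_nonneg _) h1 2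
        _ = Complex.normSq c := by rw [← Complex.sq_norm]
    have pt : ∀ y : Y, W y * W y = -1 ∧ W' y = -(W y) := by
      intro y
      refine auxC (W y) (W' y) ?_ ?_ ?_ ?_ ?_
      · have := congrArg (fun f : C(Y,ℂ) => f y) q5
        simpa using this
      · have := keybound (W - 1) (Complex.I - 1) y q1
        rw [hn1] at this; simpa using this
      · have := keybound (W + 1) (Complex.I + 1) y q2
        rw [hn2] at this; simpa using this
      · have := keybound (W' - 1) (Complex.I + 1) y q3
        rw [hn2] at this; simpa using this
      · have := keybound (W' + 1) (Complex.I - 1) y q4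
        rw [hn1] at this; simpa using this
    have hWW : W * W = -1 := by
      ext y
      simpa using (pt y).1
    have hWneg : W' = -W := by
      ext y
      simpa using (pt y).2
    constructor
    · apply Units.ext; apply Subtype.ext
      show W' = -W
      exact hWneg
    · apply Units.ext; apply Subtype.ext
      show ((((T J)^2 : (↥B)ˣ) : ↥B) : C(Y,ℂ)) = (((-1 : (↥B)ˣ) : ↥B) : C(Y,ℂ))
      calc ((((T J)^2 : (↥B)ˣ) : ↥B) : C(Y,ℂ)) = W * W := by
            rw [pow_two]; rfl
        _ = -1 := hWW
  exact ⟨hTneg1, hrest.1, hrest.2⟩
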